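/- Let ℓ be a prime and let G be a finite simple (ℓ+1)-regular graph on n vertices whose adjacency matrix A over ℝ satisfies ‖Aw‖₂ ≤ 2√ℓ · ‖w‖₂ for every w ∈ ℝ^V with ∑_{v∈V} w_v = 0. Let S be a nonempty set of vertices and j₁ any vertex. If t is a natural number with n · (2√ℓ/(ℓ+1))^t < √|S|, then there exists a walk of length exactly t in G starting at some vertex of S and ending at j₁. In particular, every vertex of G lies at distance at most t from S for every t > (log n)/log((ℓ+1)/(2√ℓ)). -/

import Mathlib

open Finset
open scoped Matrix

/-- In an `(ℓ+1)`-regular graph with the Ramanujan spectral bound, if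
`n · (2√ℓ/(ℓ+1))^t < √|S|` then there is a walk of length exactly `t` from some vertex
of `S` to any given vertex `j₁`; in particular every vertex is within distance `t` of `S`
once `t > log n / log((ℓ+1)/(2√ℓ))`. -/
theorem stmt_6 {V : Type*} [Fintype V] [DecidableEq V]
    (ℓ : ℕ) (hℓ : ℓ.Prime) (G : SimpleGraph V) [DecidableRel G.Adj]
    (hreg : G.IsRegularOfDegree (ℓ + 1))
    (hram : ∀ w : V → ℝ, (∑ v, w v) = 0 →
      Real.sqrt (∑ v, ((G.adjMatrix ℝ).mulVec w v) ^ 2)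
        ≤ 2 * Real.sqrt ℓ * Real.sqrt (∑ v, (w v) ^ 2))
    (S : Finset V) (hS : S.Nonempty) (j₁ : V) :
    (∀ t : ℕ, (Fintype.card V : ℝ) * (2 * Real.sqrt ℓ / ((ℓ : ℝ) + 1)) ^ t
        < Real.sqrt S.card →
      ∃ s ∈ S, ∃ w : G.Walk s j₁, w.length = t) ∧
    (∀ t : ℕ, Real.log (Fintype.card V) / Real.log (((ℓ : ℝ) + 1) / (2 * Real.sqrt ℓ))
        < (t : ℝ) →
      ∃ s ∈ S, ∃ w : G.Walk s j₁, w.length ≤ t) := by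
  classical
  obtain ⟨s₀, hs₀⟩ := hS
  have hVne : Nonempty V := ⟨s₀⟩
  set A : Matrix V V ℝ := G.adjMatrix ℝ with hA
  set d : ℝ := (ℓ : ℝ) + 1 with hd
  set lam : ℝ := 2 * Real.sqrt ℓ with hlam
  have hℓ2 : (2 : ℝ) ≤ (ℓ : ℝ) := by exact_mod_cast hℓ.two_le
  have hsqrtℓ : 1 < Real.sqrt ℓ := by
    rw [show (1:ℝ) = Real.sqrt 1 by simp]
    exact Real.sqrt_lt_sqrt (by norm_num) (by linarith)
  have hlam_pos : 0 < lam := by rw [hlam]; linarith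
  have hd_pos : 0 < d := by rw [hd]; linarith
  have hlam_lt_d : lam < d := by
    have hms : Real.sqrt ℓ * Real.sqrt ℓ = (ℓ : ℝ) :=
      Real.mul_self_sqrt (by linarith)
    have h1 : 0 < (Real.sqrt ℓ - 1) * (Real.sqrt ℓ - 1) :=
      mul_pos (by linarith) (by linarith)
    rw [hlam, hd]; nlinarith
  set nR : ℝ := (Fintype.card V : ℝ) with hnR
  have hn_pos : 0 < nR := by
    rw [hnR]; exact_mod_cast Fintype.card_pos
  -- row sums of A are d
  have hrow : ∀ u : V, (∑ v, A v u) = d := by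
    intro u
    have h1 : ∑ v, A v u = ∑ v, A u v :=
      Finset.sum_congr rfl fun v _ => by
        simp [hA, SimpleGraph.adjMatrix_apply, G.adj_comm]
    have h2 := SimpleGraph.adjMatrix_mulVec_const_apply_of_regular
      (α := ℝ) hreg (a := (1:ℝ)) (v := u)
    rw [h1]
    simpa [Matrix.mulVec, dotProduct, hA, hd] using h2
  -- A preserves zero-sum vectors (up to factor d)
  have hsum : ∀ w : V → ℝ, (∑ v, (A *ᵥ w) v) = d * ∑ v, w v := by
    intro w
    calc ∑ v, (A *ᵥ w) v = ∑ v, ∑ u, A v u * w u := by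
          simp [Matrix.mulVec, dotProduct]
      _ = ∑ u, ∑ v, A v u * w u := Finset.sum_comm
      _ = ∑ u, (∑ v, A v u) * w u := by simp [Finset.sum_mul]
      _ = ∑ u, d * w u := by simp only [hrow]
      _ = d * ∑ u, w u := by rw [Finset.mul_sum]
  -- iterated spectral bound
  have hiter : ∀ (w : V → ℝ), (∑ v, w v) = 0 → ∀ t : ℕ,
      (∑ v, ((A ^ t) *ᵥ w) v) = 0 ∧
      Real.sqrt (∑ v, (((A ^ t) *ᵥ w) v) ^ 2)
        ≤ lam ^ t * Real.sqrt (∑ v, (w v) ^ 2) := by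
    intro w hw t
    induction t with
    | zero => simp [Matrix.one_mulVec, hw]
    | succ t ih =>
      have hstep : (A ^ (t + 1)) *ᵥ w = A *ᵥ ((A ^ t) *ᵥ w) := by
        rw [Matrix.mulVec_mulVec, ← pow_succ']
      constructor
      · rw [hstep, hsum, ih.1, mul_zero]
      · rw [hstep]
        calc Real.sqrt (∑ v, ((A *ᵥ ((A ^ t) *ᵥ w)) v) ^ 2)
            ≤ lam * Real.sqrt (∑ v, (((A ^ t) *ᵥ w) v) ^ 2) := hram _ ih.1
          _ ≤ lam * (lam ^ t * Real.sqrt (∑ v, (w v) ^ 2)) := by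
              exact mul_le_mul_of_nonneg_left ih.2 hlam_pos.le
          _ = lam ^ (t + 1) * Real.sqrt (∑ v, (w v) ^ 2) := by ring
  -- powers of A on constant vectors
  have hconst : ∀ (c : ℝ) (t : ℕ),
      (A ^ t) *ᵥ (Function.const V c) = Function.const V (d ^ t * c) := by
    intro c t
    induction t with
    | zero => simp [Matrix.one_mulVec]
    | succ t ih =>
      have hstep : (A ^ (t + 1)) *ᵥ (Function.const V c)
          = A *ᵥ ((A ^ t) *ᵥ (Function.const V c)) := by
        rw [Matrix.mulVec_mulVec, ← pow_succ']
      rw [hstep, ih]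
      funext v
      have := SimpleGraph.adjMatrix_mulVec_const_apply_of_regular
        (α := ℝ) hreg (a := d ^ t * c) (v := v)
      rw [hA]
      rw [this]
      simp only [Function.const]
      push_cast [hd]
      ring
  set Sc : ℝ := (S.card : ℝ) with hSc
  have hSc_pos : 0 < Sc := by
    rw [hSc]; exact_mod_cast Finset.card_pos.mpr ⟨s₀, hs₀⟩
  have hSc1 : 1 ≤ Sc := by
    rw [hSc]; exact_mod_cast Finset.card_pos.mpr ⟨s₀, hs₀⟩
  have hsqrtSc_pos : 0 < Real.sqrt Sc := Real.sqrt_pos.mpr hSc_pos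
  have hScsq : Real.sqrt Sc * Real.sqrt Sc = Sc := Real.mul_self_sqrt hSc_pos.le
  -- the main counting argument
  have part1 : ∀ t : ℕ, nR * (lam / d) ^ t < Real.sqrt Sc →
      ∃ s ∈ S, ∃ w : G.Walk s j₁, w.length = t := by
    intro t ht
    by_contra hcon
    push_neg at hcon
    -- indicator vector and its decomposition
    set c : ℝ := Sc / nR with hc
    set χ : V → ℝ := fun v => if v ∈ S then 1 else 0 with hχ
    set w0 : V → ℝ := fun v => χ v - c with hw0
    have hχsum : ∑ v, χ v = Sc := by
      rw [hχ, hSc]; simp [Finset.sum_ite_mem]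
    have hχsq : ∑ v, (χ v) ^ 2 = Sc := by
      rw [hχ, hSc]
      rw [show (∑ v, ((if v ∈ S then (1:ℝ) else 0)) ^ 2)
          = ∑ v, (if v ∈ S then (1:ℝ) else 0) from
        Finset.sum_congr rfl fun v _ => by split <;> norm_num]
      simp [Finset.sum_ite_mem]
    have hw0sum : ∑ v, w0 v = 0 := by
      rw [hw0]
      simp only [Finset.sum_sub_distrib, hχsum, Finset.sum_const, nsmul_eq_mul]
      rw [hc, hnR]
      field_simp
      simp [Finset.card_univ]
    have hw0sq : ∑ v, (w0 v) ^ 2 ≤ Sc := by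
      have hexp : ∑ v, (w0 v) ^ 2
          = ∑ v, ((χ v) ^ 2 - 2 * c * χ v + c ^ 2) := by
        rw [hw0]; exact Finset.sum_congr rfl fun v _ => by ring
      rw [hexp]
      rw [Finset.sum_add_distrib, Finset.sum_sub_distrib]
      rw [hχsq, ← Finset.mul_sum, hχsum]
      simp only [Finset.sum_const, nsmul_eq_mul, Finset.card_univ]
      have hcv : ((Fintype.card V : ℕ) : ℝ) = nR := hnR.symm
      rw [hcv]
      have heq : nR * c ^ 2 = Sc * c := by rw [hc]; field_simp
      rw [heq]
      have hc0 : 0 ≤ c := by rw [hc]; positivity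
      nlinarith [mul_nonneg hc0 hSc_pos.le]
    -- decomposition χ = w0 + const c
    have hdecomp : ((A ^ t) *ᵥ χ) j₁ = ((A ^ t) *ᵥ w0) j₁ + d ^ t * c := by
      have : χ = fun v => w0 v + Function.const V c v := by
        funext v; rw [hw0]; simp
      rw [this]
      rw [show (fun v => w0 v + Function.const V c v) = w0 + Function.const V c from rfl]
      rw [Matrix.mulVec_add, hconst]
      simp
    -- no walks means the entry is 0
    have hzero : ((A ^ t) *ᵥ χ) j₁ = 0 := by
      have hentry : ∀ u ∈ S, (A ^ t) j₁ u = 0 := by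
        intro u hu
        rw [hA, SimpleGraph.adjMatrix_pow_apply_eq_card_walk]
        norm_cast
        rw [Fintype.card_eq_zero_iff]
        constructor
        intro p
        refine hcon u hu p.1.reverse ?_
        rw [SimpleGraph.Walk.length_reverse]
        exact p.2
      rw [Matrix.mulVec, dotProduct]
      apply Finset.sum_eq_zero
      intro u _
      by_cases hu : u ∈ S
      · rw [hentry u hu, zero_mul]
      · rw [hχ]; simp [hu]
    -- spectral bound on the error term
    have herr : |((A ^ t) *ᵥ w0) j₁| ≤ lam ^ t * Real.sqrt Sc := by
      have h1 : (((A ^ t) *ᵥ w0) j₁) ^ 2 ≤ ∑ v, (((A ^ t) *ᵥ w0) v) ^ 2 :=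
        Finset.single_le_sum (f := fun v => (((A ^ t) *ᵥ w0) v) ^ 2)
          (fun v _ => sq_nonneg _) (Finset.mem_univ j₁)
      have h2 : |((A ^ t) *ᵥ w0) j₁| ≤ Real.sqrt (∑ v, (((A ^ t) *ᵥ w0) v) ^ 2) := by
        rw [← Real.sqrt_sq_eq_abs]
        exact Real.sqrt_le_sqrt h1
      have h3 := (hiter w0 hw0sum t).2
      have h4 : Real.sqrt (∑ v, (w0 v) ^ 2) ≤ Real.sqrt Sc := Real.sqrt_le_sqrt hw0sq
      calc |((A ^ t) *ᵥ w0) j₁| ≤ Real.sqrt (∑ v, (((A ^ t) *ᵥ w0) v) ^ 2) := h2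
        _ ≤ lam ^ t * Real.sqrt (∑ v, (w0 v) ^ 2) := h3
        _ ≤ lam ^ t * Real.sqrt Sc :=
            mul_le_mul_of_nonneg_left h4 (pow_nonneg hlam_pos.le t)
    -- numeric contradiction
    have hdt_pos : 0 < d ^ t := pow_pos hd_pos t
    have hlt_pos : 0 < lam ^ t := pow_pos hlam_pos t
    have hkey : lam ^ t * Real.sqrt Sc < d ^ t * c := by
      rw [div_pow] at ht
      have h5 : nR * lam ^ t < Real.sqrt Sc * d ^ t := by
        have h50 := mul_lt_mul_of_pos_right ht hdt_pos
        have heq : nR * (lam ^ t / d ^ t) * d ^ t = nR * lam ^ t := by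
          field_simp
        rw [heq] at h50
        exact h50
      have h6 : nR * lam ^ t * Real.sqrt Sc < Sc * d ^ t := by
        calc nR * lam ^ t * Real.sqrt Sc
            < Real.sqrt Sc * d ^ t * Real.sqrt Sc :=
              mul_lt_mul_of_pos_right h5 hsqrtSc_pos
          _ = Sc * d ^ t := by linear_combination d ^ t * hScsq
      have h7 : lam ^ t * Real.sqrt Sc * nR < d ^ t * Sc := by linarith [h6]
      rw [hc, ← mul_div_assoc, lt_div_iff₀ hn_pos]
      linarith [h7]
    have := abs_le.mp herr
    have hfinal : 0 < ((A ^ t) *ᵥ χ) j₁ := by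
      rw [hdecomp]; linarith [this.1]
    rw [hzero] at hfinal
    exact lt_irrefl 0 hfinal
  refine ⟨part1, ?_⟩
  intro t ht
  have hdl1 : 1 < d / lam := (one_lt_div hlam_pos).mpr hlam_lt_d
  have hlog_pos : 0 < Real.log (d / lam) := Real.log_pos hdl1
  rw [div_lt_iff₀ hlog_pos] at ht
  have hpow : nR < (d / lam) ^ t := by
    rw [← Real.log_lt_log_iff hn_pos (pow_pos (by linarith : (0:ℝ) < d / lam) t),
      Real.log_pow]
    calc Real.log nR < t * Real.log (d / lam) := ht
      _ = (t : ℝ) * Real.log (d / lam) := rfl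
  have hcond : nR * (lam / d) ^ t < Real.sqrt Sc := by
    have h1 : nR * lam ^ t < d ^ t := by
      rw [div_pow, lt_div_iff₀ (pow_pos hlam_pos t)] at hpow
      linarith
    have h2 : nR * (lam / d) ^ t < 1 := by
      rw [div_pow]
      rw [show nR * (lam ^ t / d ^ t) = nR * lam ^ t / d ^ t from by ring]
      exact (div_lt_one (pow_pos hd_pos t)).mpr h1
    have h3 : (1 : ℝ) ≤ Real.sqrt Sc := Real.one_le_sqrt.mpr hSc1
    linarith
  obtain ⟨s, hs, w, hw⟩ := part1 t hcond
  exact ⟨s, hs, w, hw.le⟩
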